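/- Let b be a real number. (i) If b is irrational, then the map from ℕ×ℤ to ℝ sending (n,k) to 4n(n+|k−b|) is injective (the spectrum of the Aharonov–Bohm Laplacian on the Grushin sphere is simple). (ii) If b is rational, then for every real number λ the set {(n,k) ∈ ℕ×ℤ : 4n(n+|k−b|) = λ} is finite (the spectrum is finitely degenerate). -/

import Mathlib

open Real

lemma aux_irr {b : ℝ} (hb : Irrational b) (c d : ℤ) (hc : c ≠ 0) :
    (c : ℝ) * b ≠ (d : ℝ) := by
  intro h
  exact (hb.intCast_mul hc) ⟨(d : ℚ), by rw [h]; push_cast; ring⟩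

lemma key_irr {b : ℝ} (hb : Irrational b) (n n' : ℕ) (k k' : ℤ)
    (hn : 0 < n) (hn' : 0 < n') (s s' : ℤ) (hs : s = 1 ∨ s = -1) (hs' : s' = 1 ∨ s' = -1)
    (h : (n:ℝ)^2 + (s:ℝ)*n*((k:ℝ)-b) = (n':ℝ)^2 + (s':ℝ)*n'*((k':ℝ)-b)) :
    n = n' ∧ k = k' := by
  by_cases hc : s' * (n' : ℤ) - s * (n : ℤ) = 0
  · have hnn : n = n' ∧ s = s' := by
      rcases hs with rfl | rfl <;> rcases hs' with rfl | rfl <;> constructor <;> omega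
    obtain ⟨rfl, rfl⟩ := hnn
    refine ⟨rfl, ?_⟩
    have hne : (s:ℝ) * n ≠ 0 := by
      have : (s:ℝ) ≠ 0 := by rcases hs with rfl | rfl <;> norm_num
      positivity
    have : (k:ℝ) = (k':ℝ) := by
      have h2 : (s:ℝ)*n*((k:ℝ)-b) = (s:ℝ)*n*((k':ℝ)-b) := by linarith
      have := mul_left_cancel₀ hne h2
      linarith
    exact_mod_cast this
  · exfalso
    apply aux_irr hb (s' * (n':ℤ) - s * (n:ℤ))
      ((n':ℤ)^2 + s'*(n':ℤ)*k' - (n:ℤ)^2 - s*(n:ℤ)*k) hc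
    push_cast
    linear_combination h

theorem grushin_sphere_ab_degeneracy (b : ℝ) :
    (Irrational b →
      ∀ (n n' : ℕ) (k k' : ℤ), 0 < n → 0 < n' →
        4 * n * ((n : ℝ) + |(k : ℝ) - b|) = 4 * n' * ((n' : ℝ) + |(k' : ℝ) - b|) →
        n = n' ∧ k = k') ∧
    (∀ q : ℚ, b = (q : ℝ) → ∀ lam : ℝ,
      Set.Finite {p : ℕ × ℤ | 0 < p.1 ∧
        4 * p.1 * ((p.1 : ℝ) + |(p.2 : ℝ) - b|) = lam}) := by
  constructor
  · intro hb n n' k k' hn hn' h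
    rcases abs_cases ((k:ℝ) - b) with ⟨h1, _⟩ | ⟨h1, _⟩ <;>
      rcases abs_cases ((k':ℝ) - b) with ⟨h2, _⟩ | ⟨h2, _⟩ <;>
      rw [h1, h2] at h
    · exact key_irr hb n n' k k' hn hn' 1 1 (Or.inl rfl) (Or.inl rfl)
        (by push_cast; linear_combination h / 4)
    · exact key_irr hb n n' k k' hn hn' 1 (-1) (Or.inl rfl) (Or.inr rfl)
        (by push_cast; linear_combination h / 4)
    · exact key_irr hb n n' k k' hn hn' (-1) 1 (Or.inr rfl) (Or.inl rfl)
        (by push_cast; linear_combination h / 4)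
    · exact key_irr hb n n' k k' hn hn' (-1) (-1) (Or.inr rfl) (Or.inr rfl)
        (by push_cast; linear_combination h / 4)
  · intro q hq lam
    apply Set.Finite.subset
      (((Set.finite_Icc 0 (⌈lam⌉₊)).prod (Set.finite_Icc (-(⌈lam + |b|⌉)) ⌈lam + |b|⌉)))
    rintro ⟨n, k⟩ ⟨hn, h⟩
    simp only [Set.mem_prod, Set.mem_Icc] at *
    have hn1 : (1:ℝ) ≤ n := by exact_mod_cast hn
    have habs : (0:ℝ) ≤ |(k:ℝ) - b| := abs_nonneg _
    have hnlam : (n:ℝ) ≤ lam := by nlinarith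
    have hklam : |(k:ℝ) - b| ≤ lam := by nlinarith
    have hk : |(k:ℝ)| ≤ lam + |b| := by
      calc |(k:ℝ)| = |((k:ℝ) - b) + b| := by ring_nf
        _ ≤ |(k:ℝ) - b| + |b| := abs_add_le _ _
        _ ≤ lam + |b| := by linarith
    constructor
    · refine ⟨Nat.zero_le _, ?_⟩
      calc n = ⌈(n:ℝ)⌉₊ := (Nat.ceil_natCast n).symm
        _ ≤ ⌈lam⌉₊ := Nat.ceil_mono hnlam
    · have : (|k| : ℝ) ≤ (⌈lam + |b|⌉ : ℝ) := by
        exact le_trans hk (Int.le_ceil _)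
      have h2 : |k| ≤ ⌈lam + |b|⌉ := by exact_mod_cast this
      exact abs_le.mp h2
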